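/- Let a, b, c, d be real numbers with ac ≠ 0 and suppose Δ_Δ := c² − a²(cx_A + d) < 0, where x_A = −b/a and x_B = −d/c. Then the two (complex conjugate) roots x_Δ^± = x_A + (−2c ± 2i√(−Δ_Δ))/a² of Δ(z) = a²z² + (2ab+4c)z + (b²+4d) satisfy |x_Δ^± − x_B| = |x_A − x_B|, i.e. both roots lie on the circle centered at x_B with radius |x_A − x_B|. -/

import Mathlib

theorem stmt_5 (a b c d : ℝ) (h : a * c ≠ 0)
    (hneg : c ^ 2 - a ^ 2 * (c * (-b / a) + d) < 0) :
    ‖((((-b / a : ℝ)) : ℂ)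
        + (((-2 * c : ℝ) : ℂ) + 2 * Complex.I
            * ((Real.sqrt (-(c ^ 2 - a ^ 2 * (c * (-b / a) + d))) : ℝ) : ℂ)) / ((a : ℂ) ^ 2)
        - ((-d / c : ℝ) : ℂ))‖ = |(-b / a) - (-d / c)| ∧
    ‖((((-b / a : ℝ)) : ℂ)
        + (((-2 * c : ℝ) : ℂ) - 2 * Complex.I
            * ((Real.sqrt (-(c ^ 2 - a ^ 2 * (c * (-b / a) + d))) : ℝ) : ℂ)) / ((a : ℂ) ^ 2)
        - ((-d / c : ℝ) : ℂ))‖ = |(-b / a) - (-d / c)| := by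
  have ha : a ≠ 0 := fun h' => h (by simp [h'])
  have hc : c ≠ 0 := fun h' => h (by simp [h'])
  have ha2 : (a:ℂ)^2 ≠ 0 := by exact_mod_cast pow_ne_zero 2 (Complex.ofReal_ne_zero.mpr ha)
  set s := Real.sqrt (-(c ^ 2 - a ^ 2 * (c * (-b / a) + d))) with hs
  have hs2 : s ^ 2 = -(c ^ 2 - a ^ 2 * (c * (-b / a) + d)) := Real.sq_sqrt (by linarith)
  have hs2' : s ^ 2 = -c^2 - a*b*c + a^2*d := by
    rw [hs2]
    field_simp
    ring
  have key : ((-b/a - 2*c/a^2 - (-d/c))^2 + (2*s/a^2)^2) = (-b/a - (-d/c))^2 := by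
    have e : (2*s/a^2)^2 = 4*(-c^2 - a*b*c + a^2*d)/a^4 := by
      rw [div_pow, mul_pow, hs2']
      ring_nf
    rw [e]
    field_simp
    ring
  have absr : Real.sqrt ((-b/a - 2*c/a^2 - (-d/c))^2 + (2*s/a^2)^2) = |(-b / a) - (-d / c)| := by
    rw [key, Real.sqrt_sq_eq_abs]
  constructor
  · have hz : (((-b / a : ℝ)) : ℂ)
        + (((-2 * c : ℝ) : ℂ) + 2 * Complex.I * ((s : ℝ) : ℂ)) / ((a : ℂ) ^ 2)
        - ((-d / c : ℝ) : ℂ)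
        = ((-b/a - 2*c/a^2 - (-d/c) : ℝ) : ℂ) + ((2*s/a^2 : ℝ) : ℂ) * Complex.I := by
      push_cast
      field_simp
      ring
    rw [hz, Complex.norm_add_mul_I, absr]
  · have hz : (((-b / a : ℝ)) : ℂ)
        + (((-2 * c : ℝ) : ℂ) - 2 * Complex.I * ((s : ℝ) : ℂ)) / ((a : ℂ) ^ 2)
        - ((-d / c : ℝ) : ℂ)
        = ((-b/a - 2*c/a^2 - (-d/c) : ℝ) : ℂ) + ((-(2*s/a^2) : ℝ) : ℂ) * Complex.I := by
      push_cast
      field_simp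
      ring
    rw [hz, Complex.norm_add_mul_I]
    rw [show (-(2*s/a^2))^2 = (2*s/a^2)^2 by ring, absr]
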